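/- For all natural numbers n, the summatory function satisfies S(4n) = 2S(n) - i_n, S(4n+1) = 2S(n) - i_n + i_{2n}, S(4n+2) = 2S(n) - i_n, and S(4n+3) = 2S(n). -/

import Mathlib

/-- `inv2 n` is the number of inversions in the binary representation of `n`,
i.e. the number of pairs of bit positions `a > b` such that bit `a` of `n` is `1`
and bit `b` of `n` is `0`. -/
def inv2 (n : ℕ) : ℕ :=
  ((Finset.range (n + 1) ×ˢ Finset.range (n + 1)).filter
    (fun p => p.2 < p.1 ∧ n.testBit p.1 = true ∧ n.testBit p.2 = false)).card

/-- `iSeq n = (-1)^(inv2 n)`. -/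
def iSeq (n : ℕ) : ℤ := (-1) ^ inv2 n


/-- The summatory function `S N = ∑_{0 ≤ n ≤ N} iSeq n`. -/
def S (N : ℕ) : ℤ := ∑ n ∈ Finset.range (N + 1), iSeq n


def invF (m n : ℕ) : ℕ :=
  ((Finset.range m ×ˢ Finset.range m).filter
    (fun p => p.2 < p.1 ∧ n.testBit p.1 = true ∧ n.testBit p.2 = false)).card

def sF (m n : ℕ) : ℕ := ((Finset.range m).filter (fun a => n.testBit a = true)).card

lemma bit_le {n a : ℕ} (h : n.testBit a = true) : a ≤ n := by
  have h1 := Nat.ge_two_pow_of_testBit h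
  have h2 := Nat.lt_two_pow_self (n := a)
  omega

lemma invF_stable {m m' n : ℕ} (h1 : n < m) (h2 : m ≤ m') : invF m n = invF m' n := by
  unfold invF
  congr 1
  ext p
  simp only [Finset.mem_filter, Finset.mem_product, Finset.mem_range]
  constructor
  · rintro ⟨⟨a, b⟩, c, d, e⟩; exact ⟨⟨by omega, by omega⟩, c, d, e⟩
  · rintro ⟨⟨a, b⟩, c, d, e⟩
    have := bit_le d
    exact ⟨⟨by omega, by omega⟩, c, d, e⟩

lemma sF_stable {m m' n : ℕ} (h1 : n < m) (h2 : m ≤ m') : sF m n = sF m' n := by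
  unfold sF
  congr 1
  ext a
  simp only [Finset.mem_filter, Finset.mem_range]
  constructor
  · rintro ⟨c, d⟩; exact ⟨by omega, d⟩
  · rintro ⟨c, d⟩; have := bit_le d; exact ⟨by omega, d⟩

lemma testBit_two_mul (n k : ℕ) : (2 * n).testBit (k + 1) = n.testBit k := by
  rw [Nat.testBit_succ]
  congr 1
  omega

lemma testBit_two_mul_zero (n : ℕ) : (2 * n).testBit 0 = false := by
  rw [Nat.testBit_zero]
  simp

lemma testBit_two_mul_add_one (n k : ℕ) : (2 * n + 1).testBit (k + 1) = n.testBit k := by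
  rw [Nat.testBit_succ]
  congr 1
  omega

lemma testBit_two_mul_add_one_zero (n : ℕ) : (2 * n + 1).testBit 0 = true := by
  rw [Nat.testBit_zero]
  simp

lemma invF_odd (m n : ℕ) : invF (m + 1) (2 * n + 1) = invF m n := by
  unfold invF
  apply Finset.card_nbij' (fun p => (p.1 - 1, p.2 - 1)) (fun p => (p.1 + 1, p.2 + 1))
  · rintro ⟨a, b⟩ hp
    simp only [Finset.mem_coe, Finset.mem_filter, Finset.mem_product, Finset.mem_range] at hp ⊢
    obtain ⟨⟨ha, hb⟩, hlt, h1, h0⟩ := hp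
    have hb0 : b ≠ 0 := by
      intro h; rw [h, testBit_two_mul_add_one_zero] at h0; exact absurd h0 (by simp)
    have ha0 : a ≠ 0 := by omega
    obtain ⟨a', rfl⟩ : ∃ a', a = a' + 1 := ⟨a - 1, by omega⟩
    obtain ⟨b', rfl⟩ : ∃ b', b = b' + 1 := ⟨b - 1, by omega⟩
    rw [testBit_two_mul_add_one] at h1
    rw [testBit_two_mul_add_one] at h0
    exact ⟨⟨by omega, by omega⟩, by omega, by simpa using h1, by simpa using h0⟩
  · rintro ⟨a, b⟩ hp
    simp only [Finset.mem_coe, Finset.mem_filter, Finset.mem_product, Finset.mem_range] at hp ⊢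
    obtain ⟨⟨ha, hb⟩, hlt, h1, h0⟩ := hp
    refine ⟨⟨by omega, by omega⟩, by omega, ?_, ?_⟩
    · rw [testBit_two_mul_add_one]; exact h1
    · rw [testBit_two_mul_add_one]; exact h0
  · rintro ⟨a, b⟩ hp
    simp only [Finset.mem_coe, Finset.mem_filter, Finset.mem_product, Finset.mem_range] at hp
    obtain ⟨⟨ha, hb⟩, hlt, h1, h0⟩ := hp
    have hb0 : b ≠ 0 := by
      intro h; rw [h, testBit_two_mul_add_one_zero] at h0; exact absurd h0 (by simp)
    simp only [Prod.mk.injEq]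
    omega
  · rintro ⟨a, b⟩ _
    simp

lemma sF_even (m n : ℕ) : sF (m + 1) (2 * n) = sF m n := by
  unfold sF
  apply Finset.card_nbij' (fun a => a - 1) (fun a => a + 1)
  · intro a ha
    simp only [Finset.mem_coe, Finset.mem_filter, Finset.mem_range] at ha ⊢
    obtain ⟨ha, h1⟩ := ha
    have ha0 : a ≠ 0 := by
      intro h; rw [h, testBit_two_mul_zero] at h1; exact absurd h1 (by simp)
    obtain ⟨a', rfl⟩ : ∃ a', a = a' + 1 := ⟨a - 1, by omega⟩
    rw [testBit_two_mul] at h1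
    exact ⟨by omega, by simpa using h1⟩
  · intro a ha
    simp only [Finset.mem_coe, Finset.mem_filter, Finset.mem_range] at ha ⊢
    exact ⟨by omega, by rw [testBit_two_mul]; exact ha.2⟩
  · intro a ha
    simp only [Finset.mem_coe, Finset.mem_filter, Finset.mem_range] at ha
    have : a ≠ 0 := by
      intro h; rw [h, testBit_two_mul_zero] at ha; exact absurd ha.2 (by simp)
    beta_reduce
    omega
  · intro a _; simp

lemma sF_odd (m n : ℕ) : sF (m + 1) (2 * n + 1) = sF m n + 1 := by
  unfold sF
  have key := Finset.card_filter_add_card_filter_not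
    (s := (Finset.range (m + 1)).filter (fun a => (2 * n + 1).testBit a = true))
    (p := fun a => a = 0)
  have h0 : (((Finset.range (m + 1)).filter (fun a => (2 * n + 1).testBit a = true)).filter
      (fun a => a = 0)).card = 1 := by
    have : ((Finset.range (m + 1)).filter (fun a => (2 * n + 1).testBit a = true)).filter
        (fun a => a = 0) = {0} := by
      ext a
      simp only [Finset.mem_coe, Finset.mem_filter, Finset.mem_range, Finset.mem_singleton]
      constructor
      · rintro ⟨_, h⟩; exact h
      · rintro rfl; exact ⟨⟨by omega, testBit_two_mul_add_one_zero n⟩, rfl⟩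
    rw [this]; rfl
  have h1 : (((Finset.range (m + 1)).filter (fun a => (2 * n + 1).testBit a = true)).filter
      (fun a => ¬a = 0)).card
      = ((Finset.range m).filter (fun a => n.testBit a = true)).card := by
    apply Finset.card_nbij' (fun a => a - 1) (fun a => a + 1)
    · intro a ha
      simp only [Finset.mem_coe, Finset.mem_filter, Finset.mem_range] at ha ⊢
      obtain ⟨⟨ha, hb⟩, h0'⟩ := ha
      obtain ⟨a', rfl⟩ : ∃ a', a = a' + 1 := ⟨a - 1, by omega⟩
      rw [testBit_two_mul_add_one] at hb
      exact ⟨by omega, by simpa using hb⟩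
    · intro a ha
      simp only [Finset.mem_coe, Finset.mem_filter, Finset.mem_range] at ha ⊢
      exact ⟨⟨by omega, by rw [testBit_two_mul_add_one]; exact ha.2⟩, by omega⟩
    · intro a ha
      simp only [Finset.mem_coe, Finset.mem_filter, Finset.mem_range] at ha
      beta_reduce
      omega
    · intro a _; simp
  omega

lemma invF_even (m n : ℕ) : invF (m + 1) (2 * n) = invF m n + sF m n := by
  unfold invF sF
  set T := (Finset.range (m + 1) ×ˢ Finset.range (m + 1)).filter
    (fun p => p.2 < p.1 ∧ (2 * n).testBit p.1 = true ∧ (2 * n).testBit p.2 = false) with hT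
  have key := Finset.card_filter_add_card_filter_not (s := T)
    (p := fun p => p.2 = 0)
  have h0 : (T.filter (fun p => p.2 = 0)).card
      = ((Finset.range m).filter (fun a => n.testBit a = true)).card := by
    apply Finset.card_nbij' (fun p => p.1 - 1) (fun a => (a + 1, 0))
    · rintro ⟨a, b⟩ hp
      simp only [hT, Finset.mem_coe, Finset.mem_filter, Finset.mem_product, Finset.mem_range] at hp ⊢
      obtain ⟨⟨⟨ha, hb⟩, hlt, h1', h0'⟩, hb0⟩ := hp
      subst hb0
      obtain ⟨a', rfl⟩ : ∃ a', a = a' + 1 := ⟨a - 1, by omega⟩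
      rw [testBit_two_mul] at h1'
      exact ⟨by omega, by simpa using h1'⟩
    · rintro a ha
      simp only [hT, Finset.mem_coe, Finset.mem_filter, Finset.mem_product, Finset.mem_range] at ha ⊢
      refine ⟨⟨⟨by omega, by omega⟩, by omega, ?_, testBit_two_mul_zero n⟩, trivial⟩
      rw [testBit_two_mul]; exact ha.2
    · rintro ⟨a, b⟩ hp
      simp only [hT, Finset.mem_coe, Finset.mem_filter, Finset.mem_product, Finset.mem_range] at hp
      obtain ⟨⟨⟨ha, hb⟩, hlt, h1', h0'⟩, hb0⟩ := hp
      simp only [Prod.mk.injEq]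
      omega
    · intro a _; simp
  have h1 : (T.filter (fun p => ¬p.2 = 0)).card
      = ((Finset.range m ×ˢ Finset.range m).filter
        (fun p => p.2 < p.1 ∧ n.testBit p.1 = true ∧ n.testBit p.2 = false)).card := by
    apply Finset.card_nbij' (fun p => (p.1 - 1, p.2 - 1)) (fun p => (p.1 + 1, p.2 + 1))
    · rintro ⟨a, b⟩ hp
      simp only [hT, Finset.mem_coe, Finset.mem_filter, Finset.mem_product, Finset.mem_range] at hp ⊢
      obtain ⟨⟨⟨ha, hb⟩, hlt, h1', h0'⟩, hb0⟩ := hp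
      obtain ⟨a', rfl⟩ : ∃ a', a = a' + 1 := ⟨a - 1, by omega⟩
      obtain ⟨b', rfl⟩ : ∃ b', b = b' + 1 := ⟨b - 1, by omega⟩
      rw [testBit_two_mul] at h1' h0'
      exact ⟨⟨by omega, by omega⟩, by omega, by simpa using h1', by simpa using h0'⟩
    · rintro ⟨a, b⟩ hp
      simp only [hT, Finset.mem_coe, Finset.mem_filter, Finset.mem_product, Finset.mem_range] at hp ⊢
      obtain ⟨⟨ha, hb⟩, hlt, h1', h0'⟩ := hp
      refine ⟨⟨⟨by omega, by omega⟩, by omega, ?_, ?_⟩, by omega⟩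
      · rw [testBit_two_mul]; exact h1'
      · rw [testBit_two_mul]; exact h0'
    · rintro ⟨a, b⟩ hp
      simp only [hT, Finset.mem_coe, Finset.mem_filter, Finset.mem_product, Finset.mem_range] at hp
      obtain ⟨⟨⟨ha, hb⟩, hlt, h1', h0'⟩, hb0⟩ := hp
      simp only [Prod.mk.injEq]
      omega
    · intro a _; simp
  omega

def sN (n : ℕ) : ℕ := sF (n + 1) n

lemma inv2_eq_invF (n : ℕ) : inv2 n = invF (n + 1) n := rfl

lemma inv2_odd (n : ℕ) : inv2 (2 * n + 1) = inv2 n := by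
  rw [inv2_eq_invF, inv2_eq_invF, show 2 * n + 1 + 1 = (2 * n + 1) + 1 from rfl,
    invF_odd (2 * n + 1) n]
  exact (invF_stable (by omega) (by omega)).symm

lemma inv2_even (n : ℕ) : inv2 (2 * n) = inv2 n + sN n := by
  rcases Nat.eq_zero_or_pos n with rfl | hn
  · decide
  · rw [inv2_eq_invF, show 2 * n + 1 = (2 * n) + 1 from rfl, invF_even (2 * n) n,
      inv2_eq_invF, sN]
    rw [invF_stable (n := n) (by omega) (by omega : n + 1 ≤ 2 * n),
      sF_stable (n := n) (by omega) (by omega : n + 1 ≤ 2 * n)]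

lemma sN_even (n : ℕ) : sN (2 * n) = sN n := by
  rcases Nat.eq_zero_or_pos n with rfl | hn
  · decide
  · rw [sN, show 2 * n + 1 = (2 * n) + 1 from rfl, sF_even (2 * n) n, sN]
    rw [sF_stable (n := n) (by omega) (by omega : n + 1 ≤ 2 * n)]

lemma sN_odd (n : ℕ) : sN (2 * n + 1) = sN n + 1 := by
  rw [sN, show 2 * n + 1 + 1 = (2 * n + 1) + 1 from rfl, sF_odd (2 * n + 1) n, sN]
  rw [sF_stable (n := n) (by omega) (by omega : n + 1 ≤ 2 * n + 1)]

lemma iSeq_odd (n : ℕ) : iSeq (2 * n + 1) = iSeq n := by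
  simp [iSeq, inv2_odd]

lemma inv2_four (n : ℕ) : inv2 (4 * n) = inv2 n + 2 * sN n := by
  rw [show 4 * n = 2 * (2 * n) from by ring, inv2_even, inv2_even, sN_even]
  ring

lemma iSeq_four (n : ℕ) : iSeq (4 * n) = iSeq n := by
  simp [iSeq, inv2_four, pow_add, pow_mul]

lemma iSeq_four_one (n : ℕ) : iSeq (4 * n + 1) = iSeq (2 * n) := by
  rw [show 4 * n + 1 = 2 * (2 * n) + 1 from by ring, iSeq_odd]

lemma iSeq_four_two (n : ℕ) : iSeq (4 * n + 2) = -iSeq (2 * n) := by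
  have h : inv2 (4 * n + 2) = inv2 (2 * n) + 1 := by
    rw [show 4 * n + 2 = 2 * (2 * n + 1) from by ring, inv2_even, inv2_odd, sN_odd,
      inv2_even]
    ring
  simp [iSeq, h, pow_succ]

lemma iSeq_four_three (n : ℕ) : iSeq (4 * n + 3) = iSeq n := by
  rw [show 4 * n + 3 = 2 * (2 * n + 1) + 1 from by ring, iSeq_odd, iSeq_odd]

lemma S_succ (k : ℕ) : S (k + 1) = S k + iSeq (k + 1) := Finset.sum_range_succ _ _

lemma S_three (n : ℕ) : S (4 * n + 3) = 2 * S n := by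
  induction n with
  | zero =>
      show S 3 = 2 * S 0
      have h0 : inv2 0 = 0 := by decide
      have h1 : inv2 1 = 0 := by decide
      have h2 : inv2 2 = 1 := by decide
      have h3 : inv2 3 = 0 := by decide
      simp [S, Finset.sum_range_succ, iSeq, h0, h1, h2, h3]
  | succ m ih =>
      rw [show 4 * (m + 1) + 3 = (4 * m + 3) + 1 + 1 + 1 + 1 from by ring,
        S_succ, S_succ, S_succ, S_succ, ih,
        show 4 * m + 3 + 1 = 4 * (m + 1) from by ring,
        show 4 * m + 5 + 1 = 4 * (m + 1) + 2 from by ring,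
        show 4 * (m + 1) + 2 + 1 = 4 * (m + 1) + 3 from by ring,
        iSeq_four, iSeq_four_one, iSeq_four_two, iSeq_four_three, S_succ]
      ring

lemma S_zero' (n : ℕ) : S (4 * n) = 2 * S n - iSeq n := by
  rcases n with _ | m
  · show S 0 = 2 * S 0 - iSeq 0
    have h0 : inv2 0 = 0 := by decide
    simp [S, iSeq, h0]
  · rw [show 4 * (m + 1) = (4 * m + 3) + 1 from by ring, S_succ, S_three,
      show 4 * m + 3 + 1 = 4 * (m + 1) from by ring, iSeq_four, S_succ]
    ring

theorem summatory_recurrences (n : ℕ) :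
    S (4 * n) = 2 * S n - iSeq n ∧
      S (4 * n + 1) = 2 * S n - iSeq n + iSeq (2 * n) ∧
      S (4 * n + 2) = 2 * S n - iSeq n ∧
      S (4 * n + 3) = 2 * S n := by
  refine ⟨S_zero' n, ?_, ?_, S_three n⟩
  · rw [S_succ, S_zero', iSeq_four_one]
  · rw [show 4 * n + 2 = (4 * n + 1) + 1 from rfl, S_succ, S_succ, S_zero',
      iSeq_four_one, iSeq_four_two]
    ring
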